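/- arXiv:1702.08258 — 4 statements merged into one kernel-verified Lean document; each statement's English description precedes it below -/
import Mathlib

section
/- Let m, m_t, m_r be positive integers with m_t ≤ m_r and m_t + m_r ≤ m. Then for every s ≥ 0, the ergodic capacity of the MIMO Jacobi fading channel satisfies the upper bound E[ln det(I_{m_t} + s·HᴴH)] ≤ m_t · ln(1 + s·m_r/m), where the expectation is over the Haar probability measure on the unitary group U(m). -/
open MeasureTheory Matrix

/-- Borel measurable-space structure on the unitary group `U(m)`. -/
noncomputable instance (m : ℕ) : MeasurableSpace (Matrix.unitaryGroup (Fin m) ℂ) := borel _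

instance (m : ℕ) : BorelSpace (Matrix.unitaryGroup (Fin m) ℂ) := ⟨rfl⟩

/-- The MIMO Jacobi fading channel matrix: the upper-left `mr × mt` block of a
unitary `m × m` matrix `U`. -/
noncomputable def jacobiH (m mt mr : ℕ) (hr : mr ≤ m) (ht : mt ≤ m)
    (U : Matrix.unitaryGroup (Fin m) ℂ) : Matrix (Fin mr) (Fin mt) ℂ :=
  (U : Matrix (Fin m) (Fin m) ℂ).submatrix (Fin.castLE hr) (Fin.castLE ht)

/-- The ergodic capacity `E[ln det (I + s · Hᴴ H)]` of the MIMO Jacobi fading channel,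
the expectation being taken with respect to the measure `μ` on the unitary group. -/
noncomputable def ergodicCapacity (m mt mr : ℕ) (hr : mr ≤ m) (ht : mt ≤ m) (s : ℝ)
    (μ : Measure (Matrix.unitaryGroup (Fin m) ℂ)) : ℝ :=
  ∫ U, Real.log ((Matrix.det ((1 : Matrix (Fin mt) (Fin mt) ℂ) +
      (s : ℂ) • ((jacobiH m mt mr hr ht U)ᴴ * jacobiH m mt mr hr ht U))).re) ∂μ

namespace JacobiAux

open scoped ComplexOrder

variable {m : ℕ}

lemma continuous_coe :
    Continuous fun U : Matrix.unitaryGroup (Fin m) ℂ => (U : Matrix (Fin m) (Fin m) ℂ) :=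
  continuous_subtype_val

lemma continuous_entry (a b : Fin m) :
    Continuous fun U : Matrix.unitaryGroup (Fin m) ℂ => (U : Matrix (Fin m) (Fin m) ℂ) a b :=
  (continuous_apply_apply a b).comp continuous_subtype_val

lemma continuous_normSq_entry (a b : Fin m) :
    Continuous fun U : Matrix.unitaryGroup (Fin m) ℂ =>
      Complex.normSq ((U : Matrix (Fin m) (Fin m) ℂ) a b) :=
  Complex.continuous_normSq.comp (continuous_entry a b)

/-- Columns of a unitary matrix have unit norm. -/
lemma sum_normSq_col {U : Matrix (Fin m) (Fin m) ℂ} (hU : U ∈ Matrix.unitaryGroup (Fin m) ℂ)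
    (b : Fin m) : ∑ a, Complex.normSq (U a b) = 1 := by
  have h : (star U * U) b b = (1 : Matrix (Fin m) (Fin m) ℂ) b b :=
    congrFun (congrFun (Matrix.mem_unitaryGroup_iff'.mp hU) b) b
  rw [Matrix.mul_apply, Matrix.one_apply_eq] at h
  have h2 : ∀ a : Fin m, (star U) b a * U a b = (Complex.normSq (U a b) : ℂ) := fun a => by
    rw [Complex.normSq_eq_conj_mul_self]
    simp [Matrix.star_apply]
  rw [Finset.sum_congr rfl fun a _ => h2 a] at h
  have := congrArg Complex.re h
  simpa using this

/-- The unitary group is a compact space. -/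
instance : CompactSpace (Matrix.unitaryGroup (Fin m) ℂ) := by
  have hK : IsCompact (Set.univ.pi fun _ : Fin m =>
      Set.univ.pi fun _ : Fin m => Metric.closedBall (0 : ℂ) 1) :=
    isCompact_univ_pi fun _ => isCompact_univ_pi fun _ => isCompact_closedBall 0 1
  have hclosed : IsClosed (Matrix.unitaryGroup (Fin m) ℂ : Set (Matrix (Fin m) (Fin m) ℂ)) := by
    have hset : (Matrix.unitaryGroup (Fin m) ℂ : Set (Matrix (Fin m) (Fin m) ℂ)) =
        {U : Matrix (Fin m) (Fin m) ℂ | U * star U = 1} := by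
      ext U; exact Matrix.mem_unitaryGroup_iff
    rw [hset]
    exact isClosed_eq (continuous_id.matrix_mul continuous_star) continuous_const
  have hcomp : IsCompact (Matrix.unitaryGroup (Fin m) ℂ : Set (Matrix (Fin m) (Fin m) ℂ)) := by
    refine IsCompact.of_isClosed_subset hK hclosed ?_
    intro U hU
    intro a _
    intro b _
    have hs := sum_normSq_col hU b
    have h1 : Complex.normSq (U a b) ≤ 1 := by
      rw [← hs]
      exact Finset.single_le_sum (f := fun i => Complex.normSq (U i b))
        (fun i _ => Complex.normSq_nonneg _) (Finset.mem_univ a)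
    have h2 : ‖U a b‖ ^ 2 ≤ 1 := by rwa [← Complex.sq_norm] at h1
    simp only [Metric.mem_closedBall, dist_zero_right]
    nlinarith [norm_nonneg (U a b)]
  exact isCompact_iff_compactSpace.mp hcomp

/-- Continuous functions on the (compact) unitary group are integrable. -/
lemma integrable_of_cont (μ : Measure (Matrix.unitaryGroup (Fin m) ℂ))
    [IsFiniteMeasureOnCompacts μ] {f : Matrix.unitaryGroup (Fin m) ℂ → ℝ}
    (hf : Continuous f) : Integrable f μ :=
  hf.integrable_of_hasCompactSupport
    (IsCompact.of_isClosed_subset isCompact_univ (isClosed_tsupport f) (Set.subset_univ _))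

/-- The permutation matrix associated to `σ`, as a unitary matrix. -/
noncomputable def permU (σ : Equiv.Perm (Fin m)) : Matrix.unitaryGroup (Fin m) ℂ :=
  ⟨(1 : Matrix (Fin m) (Fin m) ℂ).submatrix σ _root_.id, by
    rw [Matrix.mem_unitaryGroup_iff']
    have hstar : star ((1 : Matrix (Fin m) (Fin m) ℂ).submatrix σ _root_.id)
        = (1 : Matrix (Fin m) (Fin m) ℂ).submatrix _root_.id σ := by
      simp [Matrix.star_eq_conjTranspose, Matrix.conjTranspose_submatrix]
    rw [hstar, Matrix.submatrix_mul_equiv (1 : Matrix (Fin m) (Fin m) ℂ) 1 _root_.id σ _root_.id]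
    simp⟩

lemma permU_mul_apply (σ : Equiv.Perm (Fin m)) (U : Matrix.unitaryGroup (Fin m) ℂ) (a b : Fin m) :
    ((permU σ * U : Matrix.unitaryGroup (Fin m) ℂ) : Matrix (Fin m) (Fin m) ℂ) a b
      = (U : Matrix (Fin m) (Fin m) ℂ) (σ a) b := by
  show ((permU σ : Matrix (Fin m) (Fin m) ℂ) * (U : Matrix (Fin m) (Fin m) ℂ)) a b = _
  simp [permU, Matrix.mul_apply, Matrix.one_apply, Matrix.submatrix_apply]

/-- The expected squared modulus of any entry of a Haar-unitary matrix is `1/m`. -/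
lemma integral_normSq_entry (μ : Measure (Matrix.unitaryGroup (Fin m) ℂ))
    [μ.IsHaarMeasure] [IsProbabilityMeasure μ] (a b : Fin m) :
    ∫ U : Matrix.unitaryGroup (Fin m) ℂ,
      Complex.normSq ((U : Matrix (Fin m) (Fin m) ℂ) a b) ∂μ = 1 / m := by
  have hm : 0 < m := Fin.pos a
  have hconst : ∀ a' : Fin m,
      (∫ U : Matrix.unitaryGroup (Fin m) ℂ,
        Complex.normSq ((U : Matrix (Fin m) (Fin m) ℂ) a' b) ∂μ)
        = ∫ U : Matrix.unitaryGroup (Fin m) ℂ,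
          Complex.normSq ((U : Matrix (Fin m) (Fin m) ℂ) a b) ∂μ := by
    intro a'
    have hinv := integral_mul_left_eq_self (μ := μ)
      (fun U : Matrix.unitaryGroup (Fin m) ℂ =>
        Complex.normSq ((U : Matrix (Fin m) (Fin m) ℂ) a b)) (permU (Equiv.swap a a'))
    rw [← hinv]
    refine integral_congr_ae (Filter.Eventually.of_forall fun U => ?_)
    simp only [permU_mul_apply, Equiv.swap_apply_left]
  have hsum : ∑ a' : Fin m, (∫ U : Matrix.unitaryGroup (Fin m) ℂ,
      Complex.normSq ((U : Matrix (Fin m) (Fin m) ℂ) a' b) ∂μ) = 1 := by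
    rw [← integral_finset_sum _ (fun a' _ => integrable_of_cont μ (continuous_normSq_entry a' b))]
    have heq : (fun U : Matrix.unitaryGroup (Fin m) ℂ =>
        ∑ a' : Fin m, Complex.normSq ((U : Matrix (Fin m) (Fin m) ℂ) a' b))
        = fun _ => (1 : ℝ) := by
      funext U; exact sum_normSq_col U.2 b
    rw [heq]
    simp
  have hmain : (m : ℝ) * ∫ U : Matrix.unitaryGroup (Fin m) ℂ,
      Complex.normSq ((U : Matrix (Fin m) (Fin m) ℂ) a b) ∂μ = 1 := by
    rw [← hsum, Finset.sum_congr rfl fun a' _ => hconst a']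
    simp [Finset.card_univ, mul_comm]
  have hm' : (m : ℝ) ≠ 0 := Nat.cast_ne_zero.mpr hm.ne'
  field_simp
  linarith

/-- Positive definiteness of `1 + s • HᴴH` for `s ≥ 0`. -/
lemma posDef_one_add {k l : ℕ} {s : ℝ} (hs : 0 ≤ s) (H : Matrix (Fin l) (Fin k) ℂ) :
    ((1 : Matrix (Fin k) (Fin k) ℂ) + (s : ℂ) • (Hᴴ * H)).PosDef := by
  refine Matrix.PosDef.add_posSemidef Matrix.PosDef.one ?_
  have hB : (Hᴴ * H).PosSemidef := Matrix.posSemidef_conjTranspose_mul_self _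
  constructor
  · have hherm := hB.isHermitian
    unfold Matrix.IsHermitian at hherm ⊢
    rw [Matrix.conjTranspose_smul, hherm]
    congr 1
    simp
  · exact (hB.smul (a := (s : ℂ)) (Complex.zero_le_real.mpr hs)).2

lemma det_re_pos {k : ℕ} {A : Matrix (Fin k) (Fin k) ℂ} (hPD : A.PosDef) :
    0 < (Matrix.det A).re := by
  have h := hPD.det_pos
  exact (Complex.lt_def.mp h).1

/-- Key pointwise bound: for a positive definite `A`,
`log (det A).re ≤ k log c + (trace A).re / c - k`. -/
lemma log_det_le {k : ℕ} {A : Matrix (Fin k) (Fin k) ℂ} (hPD : A.PosDef)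
    {c : ℝ} (hc : 0 < c) :
    Real.log ((Matrix.det A).re) ≤ k * Real.log c + (Matrix.trace A).re / c - k := by
  have hA : A.IsHermitian := hPD.isHermitian
  have hνpos : ∀ i, 0 < hA.eigenvalues i := fun i => hPD.eigenvalues_pos i
  have hdet : (Matrix.det A).re = ∏ i, hA.eigenvalues i := by
    rw [hA.det_eq_prod_eigenvalues]
    norm_cast
  have htr : (Matrix.trace A).re = ∑ i, hA.eigenvalues i := by
    have h1 : Matrix.trace A = ∑ i, (hA.eigenvalues i : ℂ) := by
      conv_lhs => rw [hA.spectral_theorem]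
      rw [Unitary.conjStarAlgAut_apply, Matrix.trace_mul_cycle,
        Matrix.mem_unitaryGroup_iff'.mp (hA.eigenvectorUnitary).2, one_mul,
        Matrix.trace_diagonal]
      rfl
    rw [h1]
    norm_cast
  have hlog : Real.log ((Matrix.det A).re) = ∑ i, Real.log (hA.eigenvalues i) := by
    rw [hdet, Real.log_prod fun i _ => (hνpos i).ne']
  rw [hlog, htr]
  have hstep : ∀ i, Real.log (hA.eigenvalues i) ≤ Real.log c + hA.eigenvalues i / c - 1 := by
    intro i
    have h := Real.log_le_sub_one_of_pos (div_pos (hνpos i) hc)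
    rw [Real.log_div (hνpos i).ne' hc.ne'] at h
    linarith
  calc ∑ i, Real.log (hA.eigenvalues i)
      ≤ ∑ i : Fin k, (Real.log c + hA.eigenvalues i / c - 1) :=
        Finset.sum_le_sum fun i _ => hstep i
    _ = k * Real.log c + (∑ i, hA.eigenvalues i) / c - k := by
        rw [Finset.sum_sub_distrib, Finset.sum_add_distrib, ← Finset.sum_div]
        simp [Finset.card_univ, mul_comm]

end JacobiAux

open JacobiAux in
/-- **Upper bound on the ergodic capacity of the MIMO Jacobi fading channel.**
If `mt ≤ mr` and `mt + mr ≤ m`, then for every SNR `s ≥ 0`,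
`E[ln det (I + s · Hᴴ H)] ≤ mt · ln (1 + s · mr / m)`, the expectation being over
the Haar probability measure on the unitary group `U(m)`. -/
theorem jacobi_ergodic_capacity_upper_bound
    (m mt mr : ℕ) (hm : 0 < m) (hmt : 0 < mt) (hmr : 0 < mr)
    (h1 : mt ≤ mr) (h2 : mt + mr ≤ m)
    (μ : Measure (Matrix.unitaryGroup (Fin m) ℂ))
    [μ.IsHaarMeasure] [IsProbabilityMeasure μ]
    (s : ℝ) (hs : 0 ≤ s) :
    ergodicCapacity m mt mr (le_trans (Nat.le_add_left mr mt) h2)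
        (le_trans (Nat.le_add_right mt mr) h2) s μ
      ≤ mt * Real.log (1 + s * mr / m) := by
  have hr : mr ≤ m := le_trans (Nat.le_add_left mr mt) h2
  have ht : mt ≤ m := le_trans (Nat.le_add_right mt mr) h2
  set c : ℝ := 1 + s * mr / m with hc_def
  have hm' : (0:ℝ) < m := by exact_mod_cast hm
  have hsmr : 0 ≤ s * mr / m := by positivity
  have hc : 0 < c := by rw [hc_def]; linarith
  -- the trace function
  set t : Matrix.unitaryGroup (Fin m) ℂ → ℝ := fun U =>
    ∑ j : Fin mt, ∑ i : Fin mr,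
      Complex.normSq ((U : Matrix (Fin m) (Fin m) ℂ) (Fin.castLE hr i) (Fin.castLE ht j))
    with ht_def
  have ht_cont : Continuous t := by
    apply continuous_finset_sum
    intro j _
    apply continuous_finset_sum
    intro i _
    exact continuous_normSq_entry _ _
  have ht_int : Integrable t μ := integrable_of_cont μ ht_cont
  have ht_integral : ∫ U, t U ∂μ = mt * mr / m := by
    rw [ht_def]
    rw [integral_finset_sum _ (fun j _ => by
      apply integrable_finset_sum
      intro i _
      exact integrable_of_cont μ (continuous_normSq_entry _ _))]
    have hj : ∀ j : Fin mt, (∫ U : Matrix.unitaryGroup (Fin m) ℂ, ∑ i : Fin mr,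
        Complex.normSq ((U : Matrix (Fin m) (Fin m) ℂ) (Fin.castLE hr i) (Fin.castLE ht j)) ∂μ)
        = mr * (1 / m) := by
      intro j
      rw [integral_finset_sum _ (fun i _ => integrable_of_cont μ (continuous_normSq_entry _ _))]
      rw [Finset.sum_congr rfl fun i _ => integral_normSq_entry μ _ _]
      simp [Finset.card_univ]
    rw [Finset.sum_congr rfl fun j _ => hj j]
    simp only [Finset.sum_const, Finset.card_univ, Fintype.card_fin, nsmul_eq_mul]
    field_simp
  -- trace value
  have htrace : ∀ U : Matrix.unitaryGroup (Fin m) ℂ,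
      (Matrix.trace ((1 : Matrix (Fin mt) (Fin mt) ℂ) +
        (s : ℂ) • ((jacobiH m mt mr hr ht U)ᴴ * jacobiH m mt mr hr ht U))).re
      = mt + s * t U := by
    intro U
    rw [Matrix.trace_add, Matrix.trace_smul, Matrix.trace_one]
    have hBt : Matrix.trace ((jacobiH m mt mr hr ht U)ᴴ * jacobiH m mt mr hr ht U)
        = ((t U : ℝ) : ℂ) := by
      rw [ht_def]
      push_cast
      rw [Matrix.trace]
      refine Finset.sum_congr rfl fun j _ => ?_
      rw [Matrix.diag_apply, Matrix.mul_apply]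
      refine Finset.sum_congr rfl fun i _ => ?_
      rw [Complex.normSq_eq_conj_mul_self]
      simp [jacobiH, Matrix.conjTranspose_apply]
    rw [hBt]
    simp [Complex.smul_re]
  -- pointwise bound
  set K : ℝ := mt * Real.log c + mt / c - mt with hK_def
  have hpoint : ∀ U : Matrix.unitaryGroup (Fin m) ℂ,
      Real.log ((Matrix.det ((1 : Matrix (Fin mt) (Fin mt) ℂ) +
        (s : ℂ) • ((jacobiH m mt mr hr ht U)ᴴ * jacobiH m mt mr hr ht U))).re)
      ≤ K + (s / c) * t U := by
    intro U
    have h := log_det_le (posDef_one_add hs (jacobiH m mt mr hr ht U)) hc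
    rw [htrace U] at h
    have heq : (mt : ℝ) * Real.log c + (mt + s * t U) / c - mt = K + (s / c) * t U := by
      rw [hK_def]; field_simp; ring
    linarith [h, heq.ge]
  -- continuity of the integrand
  have hd_cont : Continuous fun U : Matrix.unitaryGroup (Fin m) ℂ =>
      ((Matrix.det ((1 : Matrix (Fin mt) (Fin mt) ℂ) +
        (s : ℂ) • ((jacobiH m mt mr hr ht U)ᴴ * jacobiH m mt mr hr ht U))).re) := by
    apply Complex.continuous_re.comp
    apply Continuous.matrix_det
    apply Continuous.add continuous_const
    refine Continuous.const_smul (g := fun U : Matrix.unitaryGroup (Fin m) ℂ =>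
      (jacobiH m mt mr hr ht U)ᴴ * jacobiH m mt mr hr ht U) ?_ (s : ℂ)
    exact Continuous.matrix_mul
      ((continuous_coe.matrix_submatrix _ _).matrix_conjTranspose)
      (continuous_coe.matrix_submatrix _ _)
  have hd_pos : ∀ U : Matrix.unitaryGroup (Fin m) ℂ,
      0 < ((Matrix.det ((1 : Matrix (Fin mt) (Fin mt) ℂ) +
        (s : ℂ) • ((jacobiH m mt mr hr ht U)ᴴ * jacobiH m mt mr hr ht U))).re) :=
    fun U => det_re_pos (posDef_one_add hs (jacobiH m mt mr hr ht U))
  have hlog_cont : Continuous fun U : Matrix.unitaryGroup (Fin m) ℂ =>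
      Real.log ((Matrix.det ((1 : Matrix (Fin mt) (Fin mt) ℂ) +
        (s : ℂ) • ((jacobiH m mt mr hr ht U)ᴴ * jacobiH m mt mr hr ht U))).re) :=
    hd_cont.log fun U => (hd_pos U).ne'
  -- integrate
  have hleft_int : Integrable (fun U : Matrix.unitaryGroup (Fin m) ℂ =>
      Real.log ((Matrix.det ((1 : Matrix (Fin mt) (Fin mt) ℂ) +
        (s : ℂ) • ((jacobiH m mt mr hr ht U)ᴴ * jacobiH m mt mr hr ht U))).re)) μ :=
    integrable_of_cont μ hlog_cont
  have hright_int : Integrable (fun U : Matrix.unitaryGroup (Fin m) ℂ =>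
      K + (s / c) * t U) μ :=
    (integrable_const K).add (ht_int.const_mul _)
  have hmono : ergodicCapacity m mt mr hr ht s μ ≤ ∫ U, (K + (s / c) * t U) ∂μ := by
    rw [ergodicCapacity]
    exact integral_mono hleft_int hright_int hpoint
  have hrhs : ∫ U, (K + (s / c) * t U) ∂μ = K + (s / c) * (mt * mr / m) := by
    rw [integral_add (integrable_const K) (ht_int.const_mul _), integral_const,
      integral_const_mul, ht_integral]
    simp
  have hfinal : K + (s / c) * (mt * mr / m) = mt * Real.log c := by
    rw [hK_def, hc_def]
    have hmne : (m:ℝ) ≠ 0 := hm'.ne'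
    have hcne : (1 : ℝ) + s * mr / m ≠ 0 := by rw [← hc_def]; exact hc.ne'
    field_simp
    ring
  calc ergodicCapacity m mt mr hr ht s μ
      ≤ ∫ U, (K + (s / c) * t U) ∂μ := hmono
    _ = K + (s / c) * (mt * mr / m) := hrhs
    _ = mt * Real.log c := hfinal
end

section
/- Let m, m_t, m_r be positive integers with m_t ≤ m_r and m_t + m_r ≤ m. Then the ergodic capacity C(s) = E[ln det(I_{m_t} + s·HᴴH)] of the MIMO Jacobi fading channel satisfies lim_{s→0⁺} C(s)/s = m_t·m_r/m; that is, in the low-SNR regime the ergodic capacity is asymptotic to (m_t·m_r/m)·s. -/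
open MeasureTheory Matrix

open scoped ComplexOrder

/-! ### Auxiliary lemmas -/

lemma perm_mem_unitaryGroup (m : ℕ) (σ : Equiv.Perm (Fin m)) :
    σ.permMatrix ℂ ∈ Matrix.unitaryGroup (Fin m) ℂ := by
  rw [Matrix.mem_unitaryGroup_iff]
  have hstar : star (σ.permMatrix ℂ) = (σ⁻¹).permMatrix ℂ := by
    ext i j
    simp only [Matrix.star_apply, Equiv.Perm.permMatrix, PEquiv.toMatrix_apply,
      Equiv.toPEquiv_apply, Option.mem_def, Option.some.injEq]
    rw [apply_ite (star : ℂ → ℂ), star_one, star_zero]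
    congr 1
    rw [eq_iff_iff]
    constructor
    · rintro rfl; simp
    · rintro rfl; simp
  rw [hstar, Equiv.Perm.permMatrix, Equiv.Perm.permMatrix, ← PEquiv.toMatrix_trans,
    ← Equiv.toPEquiv_trans]
  rw [show σ.trans ↑σ⁻¹ = Equiv.refl _ by ext x; simp, Equiv.toPEquiv_refl, PEquiv.toMatrix_refl]

lemma unitary_col_sum {m : ℕ} (U : Matrix.unitaryGroup (Fin m) ℂ) (j : Fin m) :
    ∑ i, Complex.normSq ((U : Matrix (Fin m) (Fin m) ℂ) i j) = 1 := by
  have h := Matrix.mem_unitaryGroup_iff'.mp U.2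
  have h2 : ((star (U : Matrix (Fin m) (Fin m) ℂ) * U) j j)
      = (1 : Matrix (Fin m) (Fin m) ℂ) j j := by rw [h]
  rw [Matrix.mul_apply] at h2
  simp only [Matrix.star_apply, Matrix.one_apply_eq] at h2
  have h3 : ∑ i, ((Complex.normSq ((U : Matrix (Fin m) (Fin m) ℂ) i j) : ℂ)) = 1 := by
    rw [← h2]
    refine Finset.sum_congr rfl fun i _ => ?_
    rw [Complex.normSq_eq_conj_mul_self]
    rfl
  have := congrArg Complex.re h3
  simpa [Complex.ofReal_sum] using this

lemma unitary_entry_le {m : ℕ} (U : Matrix.unitaryGroup (Fin m) ℂ) (i j : Fin m) :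
    Complex.normSq ((U : Matrix (Fin m) (Fin m) ℂ) i j) ≤ 1 := by
  rw [← unitary_col_sum U j]
  exact Finset.single_le_sum (f := fun k => Complex.normSq ((U : Matrix (Fin m) (Fin m) ℂ) k j))
    (fun k _ => Complex.normSq_nonneg _) (Finset.mem_univ i)

lemma log_one_add_le {x : ℝ} (hx : 0 ≤ x) : Real.log (1 + x) ≤ x := by
  simpa using Real.log_le_sub_one_of_pos (show (0:ℝ) < 1 + x by linarith)

lemma le_log_one_add {x : ℝ} (hx : 0 ≤ x) : x - x ^ 2 ≤ Real.log (1 + x) := by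
  have h1 : (0:ℝ) < 1 + x := by linarith
  have h := Real.one_sub_inv_le_log_of_pos h1
  have h3 : 1 - (1 + x)⁻¹ = x / (1 + x) := by field_simp; ring
  refine le_trans ?_ h
  rw [h3, le_div_iff₀ h1]
  nlinarith

lemma det_one_add_smul_re {n : ℕ} {A : Matrix (Fin n) (Fin n) ℂ} (hA : A.IsHermitian) (s : ℝ) :
    ((1 + (s:ℂ) • A).det).re = ∏ i, (1 + s * hA.eigenvalues i) := by
  set V := (hA.eigenvectorUnitary : Matrix (Fin n) (Fin n) ℂ) with hV
  have hVV : V * star V = 1 := Matrix.mem_unitaryGroup_iff.mp hA.eigenvectorUnitary.2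
  have key : (1 : Matrix (Fin n) (Fin n) ℂ) + (s:ℂ) • A =
      V * ((1 : Matrix (Fin n) (Fin n) ℂ)
        + (s:ℂ) • diagonal (RCLike.ofReal ∘ hA.eigenvalues)) * star V := by
    rw [mul_add, mul_one, mul_smul_comm, add_mul, smul_mul_assoc, hVV]
    conv_lhs => rw [hA.spectral_theorem, Unitary.conjStarAlgAut_apply]
  have hdiag : (1 : Matrix (Fin n) (Fin n) ℂ) + (s:ℂ) • diagonal (RCLike.ofReal ∘ hA.eigenvalues)
      = diagonal (fun i => ((1 + s * hA.eigenvalues i : ℝ) : ℂ)) := by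
    ext i j
    by_cases h : i = j <;>
      simp [Matrix.one_apply, Matrix.diagonal_apply, h]
  rw [key, Matrix.det_mul_right_comm, hVV, one_mul, hdiag, Matrix.det_diagonal]
  norm_cast

lemma trace_re_eq_sum_eigenvalues {n : ℕ} {A : Matrix (Fin n) (Fin n) ℂ} (hA : A.IsHermitian) :
    A.trace.re = ∑ i, hA.eigenvalues i := by
  have hVV : star (hA.eigenvectorUnitary : Matrix (Fin n) (Fin n) ℂ)
      * (hA.eigenvectorUnitary : Matrix (Fin n) (Fin n) ℂ) = 1 :=
    Matrix.mem_unitaryGroup_iff'.mp hA.eigenvectorUnitary.2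
  conv_lhs => rw [hA.spectral_theorem]
  rw [Unitary.conjStarAlgAut_apply, Matrix.trace_mul_cycle, hVV, one_mul, Matrix.trace_diagonal]
  simp

lemma log_det_bounds {n : ℕ} {A : Matrix (Fin n) (Fin n) ℂ} (hA : A.PosSemidef) {s : ℝ}
    (hs : 0 < s) :
    0 ≤ Real.log ((1 + (s:ℂ) • A).det).re ∧
    s * A.trace.re - s ^ 2 * (n * A.trace.re ^ 2) ≤ Real.log ((1 + (s:ℂ) • A).det).re ∧
    Real.log ((1 + (s:ℂ) • A).det).re ≤ s * A.trace.re := by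
  have hnn : ∀ i, 0 ≤ hA.1.eigenvalues i := hA.eigenvalues_nonneg
  have htr : A.trace.re = ∑ i, hA.1.eigenvalues i := trace_re_eq_sum_eigenvalues hA.1
  have hlamt : ∀ i, hA.1.eigenvalues i ≤ A.trace.re := by
    intro i
    rw [htr]
    exact Finset.single_le_sum (f := fun i => hA.1.eigenvalues i) (fun k _ => hnn k)
      (Finset.mem_univ i)
  have ht0 : 0 ≤ A.trace.re := by
    rw [htr]; exact Finset.sum_nonneg fun i _ => hnn i
  rw [det_one_add_smul_re hA.1]
  have hpos : ∀ i ∈ Finset.univ, (1 + s * hA.1.eigenvalues i) ≠ 0 := by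
    intro i _
    have : 0 ≤ s * hA.1.eigenvalues i := mul_nonneg hs.le (hnn i)
    positivity
  rw [Real.log_prod hpos]
  refine ⟨Finset.sum_nonneg fun i _ =>
    Real.log_nonneg (by nlinarith [mul_nonneg hs.le (hnn i)]), ?_, ?_⟩
  · have hterm : ∀ i, s * hA.1.eigenvalues i - s ^ 2 * A.trace.re ^ 2
        ≤ Real.log (1 + s * hA.1.eigenvalues i) := by
      intro i
      have h1 := le_log_one_add (mul_nonneg hs.le (hnn i))
      have h2 : hA.1.eigenvalues i ^ 2 ≤ A.trace.re ^ 2 :=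
        pow_le_pow_left₀ (hnn i) (hlamt i) 2
      nlinarith [mul_le_mul_of_nonneg_left h2 (sq_nonneg s)]
    calc s * A.trace.re - s ^ 2 * (n * A.trace.re ^ 2)
        = ∑ i, (s * hA.1.eigenvalues i - s ^ 2 * A.trace.re ^ 2) := by
          rw [Finset.sum_sub_distrib, ← Finset.mul_sum, ← htr]
          simp [Finset.sum_const, Finset.card_univ]
          ring
      _ ≤ ∑ i, Real.log (1 + s * hA.1.eigenvalues i) :=
          Finset.sum_le_sum fun i _ => hterm i
  · calc ∑ i, Real.log (1 + s * hA.1.eigenvalues i)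
        ≤ ∑ i, s * hA.1.eigenvalues i :=
          Finset.sum_le_sum fun i _ => log_one_add_le (mul_nonneg hs.le (hnn i))
      _ = s * A.trace.re := by rw [htr, Finset.mul_sum]

lemma continuous_entry {m : ℕ} (i j : Fin m) :
    Continuous fun U : Matrix.unitaryGroup (Fin m) ℂ =>
      Complex.normSq ((U : Matrix (Fin m) (Fin m) ℂ) i j) :=
  Complex.continuous_normSq.comp (continuous_subtype_val.matrix_elem i j)

lemma unitary_continuous_mul_left {m : ℕ} (g : Matrix.unitaryGroup (Fin m) ℂ) :
    Continuous fun U : Matrix.unitaryGroup (Fin m) ℂ => g * U := by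
  apply Continuous.subtype_mk
  exact (continuous_const.matrix_mul continuous_subtype_val)

lemma integral_comp_mul_left {m : ℕ} (μ : Measure (Matrix.unitaryGroup (Fin m) ℂ))
    [μ.IsHaarMeasure] (g : Matrix.unitaryGroup (Fin m) ℂ)
    {f : Matrix.unitaryGroup (Fin m) ℂ → ℝ} (hf : AEStronglyMeasurable f μ) :
    ∫ U, f (g * U) ∂μ = ∫ U, f U ∂μ := by
  have h : μ.map (g * ·) = μ := MeasureTheory.map_mul_left_eq_self μ g
  calc ∫ U, f (g * U) ∂μ = ∫ U, f U ∂(μ.map (g * ·)) := by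
        rw [integral_map (unitary_continuous_mul_left g).aemeasurable (by rwa [h])]
    _ = ∫ U, f U ∂μ := by rw [h]

lemma integrable_entry {m : ℕ} (μ : Measure (Matrix.unitaryGroup (Fin m) ℂ))
    [IsProbabilityMeasure μ] (i j : Fin m) :
    Integrable (fun U : Matrix.unitaryGroup (Fin m) ℂ =>
      Complex.normSq ((U : Matrix (Fin m) (Fin m) ℂ) i j)) μ := by
  refine Integrable.mono' (integrable_const 1)
    ((continuous_entry i j).measurable.aestronglyMeasurable) (ae_of_all _ fun U => ?_)
  rw [Real.norm_eq_abs, abs_of_nonneg (Complex.normSq_nonneg _)]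
  exact unitary_entry_le U i j

lemma integral_entry {m : ℕ} (μ : Measure (Matrix.unitaryGroup (Fin m) ℂ)) [μ.IsHaarMeasure]
    [IsProbabilityMeasure μ] (i j : Fin m) :
    ∫ U, Complex.normSq ((U : Matrix (Fin m) (Fin m) ℂ) i j) ∂μ = 1 / m := by
  have hm : 0 < m := by
    rcases Nat.eq_zero_or_pos m with h | h
    · exact absurd i.2 (by omega)
    · exact h
  have heq : ∀ i' : Fin m,
      ∫ U, Complex.normSq ((U : Matrix (Fin m) (Fin m) ℂ) i' j) ∂μ
        = ∫ U, Complex.normSq ((U : Matrix (Fin m) (Fin m) ℂ) i j) ∂μ := by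
    intro i'
    set σ := Equiv.swap i i' with hσ
    set g : Matrix.unitaryGroup (Fin m) ℂ := ⟨σ.permMatrix ℂ, perm_mem_unitaryGroup m σ⟩ with hg
    have hcomp : ∀ U : Matrix.unitaryGroup (Fin m) ℂ,
        Complex.normSq (((g * U : Matrix.unitaryGroup (Fin m) ℂ) :
          Matrix (Fin m) (Fin m) ℂ) i j)
        = Complex.normSq ((U : Matrix (Fin m) (Fin m) ℂ) i' j) := by
      intro U
      have : ((g * U : Matrix.unitaryGroup (Fin m) ℂ) : Matrix (Fin m) (Fin m) ℂ)
          = σ.permMatrix ℂ * (U : Matrix (Fin m) (Fin m) ℂ) := rfl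
      rw [this, Equiv.Perm.permMatrix, PEquiv.toMatrix_toPEquiv_mul]
      simp [hσ, Equiv.swap_apply_left]
    calc ∫ U, Complex.normSq ((U : Matrix (Fin m) (Fin m) ℂ) i' j) ∂μ
        = ∫ U, Complex.normSq (((g * U : Matrix.unitaryGroup (Fin m) ℂ) :
            Matrix (Fin m) (Fin m) ℂ) i j) ∂μ := by
          refine integral_congr_ae (ae_of_all _ fun U => ?_)
          exact (hcomp U).symm
      _ = ∫ U, Complex.normSq ((U : Matrix (Fin m) (Fin m) ℂ) i j) ∂μ :=
          integral_comp_mul_left μ g (continuous_entry i j).measurable.aestronglyMeasurable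
  have hsum : ∑ i' : Fin m, ∫ U,
      Complex.normSq ((U : Matrix (Fin m) (Fin m) ℂ) i' j) ∂μ = 1 := by
    rw [← integral_finset_sum _ (fun i' _ => integrable_entry μ i' j)]
    calc ∫ U, ∑ i', Complex.normSq ((U : Matrix (Fin m) (Fin m) ℂ) i' j) ∂μ
        = ∫ _U, (1:ℝ) ∂μ := integral_congr_ae (ae_of_all _ fun U => unitary_col_sum U j)
      _ = 1 := by simp
  rw [Finset.sum_congr rfl (fun i' _ => heq i'), Finset.sum_const, Finset.card_univ,
    Fintype.card_fin] at hsum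
  have : (m:ℝ) ≠ 0 := Nat.cast_ne_zero.mpr hm.ne'
  rw [nsmul_eq_mul] at hsum
  field_simp
  linarith [hsum]

/-- **Low-SNR asymptotics of the ergodic capacity of the MIMO Jacobi fading channel.**
If `mt ≤ mr` and `mt + mr ≤ m`, then `C(s)/s → mt · mr / m` as `s → 0⁺`, where
`C(s) = E[ln det (I + s · Hᴴ H)]` with expectation over the Haar probability measure
on the unitary group `U(m)`. -/
theorem jacobi_ergodic_capacity_low_snr
    (m mt mr : ℕ) (hm : 0 < m) (hmt : 0 < mt) (hmr : 0 < mr)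
    (h1 : mt ≤ mr) (h2 : mt + mr ≤ m)
    (μ : Measure (Matrix.unitaryGroup (Fin m) ℂ))
    [μ.IsHaarMeasure] [IsProbabilityMeasure μ] :
    Filter.Tendsto
      (fun s : ℝ => ergodicCapacity m mt mr (le_trans (Nat.le_add_left mr mt) h2)
          (le_trans (Nat.le_add_right mt mr) h2) s μ / s)
      (nhdsWithin 0 (Set.Ioi 0))
      (nhds ((mt : ℝ) * mr / m)) := by
  have hr : mr ≤ m := le_trans (Nat.le_add_left mr mt) h2
  have ht : mt ≤ m := le_trans (Nat.le_add_right mt mr) h2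
  set H : Matrix.unitaryGroup (Fin m) ℂ → Matrix (Fin mr) (Fin mt) ℂ :=
    jacobiH m mt mr hr ht with hH
  set t : Matrix.unitaryGroup (Fin m) ℂ → ℝ := fun U => (((H U)ᴴ * H U).trace).re with htdef
  set F : ℝ → Matrix.unitaryGroup (Fin m) ℂ → ℝ := fun s U =>
    Real.log ((Matrix.det ((1 : Matrix (Fin mt) (Fin mt) ℂ) +
      (s : ℂ) • ((H U)ᴴ * H U))).re) with hFdef
  -- trace as sum of |entries|²
  have ht_eq : ∀ U, t U = ∑ j : Fin mt, ∑ i : Fin mr,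
      Complex.normSq ((U : Matrix (Fin m) (Fin m) ℂ) (Fin.castLE hr i) (Fin.castLE ht j)) := by
    intro U
    simp only [htdef, Matrix.trace, Matrix.diag, Matrix.mul_apply, Matrix.conjTranspose_apply]
    rw [Complex.re_sum]
    refine Finset.sum_congr rfl fun j _ => ?_
    rw [Complex.re_sum]
    refine Finset.sum_congr rfl fun i _ => ?_
    rw [show star (H U i j) = (starRingEnd ℂ) (H U i j) from rfl,
      ← Complex.normSq_eq_conj_mul_self, Complex.ofReal_re]
    rfl
  have hpsd : ∀ U, ((H U)ᴴ * H U).PosSemidef :=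
    fun U => Matrix.posSemidef_conjTranspose_mul_self _
  have ht_nonneg : ∀ U, 0 ≤ t U := by
    intro U; rw [ht_eq U]
    exact Finset.sum_nonneg fun j _ => Finset.sum_nonneg fun i _ => Complex.normSq_nonneg _
  have ht_le : ∀ U, t U ≤ (mt : ℝ) * mr := by
    intro U; rw [ht_eq U]
    calc ∑ j : Fin mt, ∑ i : Fin mr,
          Complex.normSq ((U : Matrix (Fin m) (Fin m) ℂ) (Fin.castLE hr i) (Fin.castLE ht j))
        ≤ ∑ _j : Fin mt, ∑ _i : Fin mr, (1:ℝ) :=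
          Finset.sum_le_sum fun j _ => Finset.sum_le_sum fun i _ => unitary_entry_le U _ _
      _ = (mt : ℝ) * mr := by simp [mul_comm]
  have hAcont : Continuous fun U : Matrix.unitaryGroup (Fin m) ℂ => (H U)ᴴ * H U :=
    ((continuous_subtype_val.matrix_submatrix _ _).matrix_conjTranspose).matrix_mul
      (continuous_subtype_val.matrix_submatrix _ _)
  have ht_cont : Continuous t := Complex.continuous_re.comp hAcont.matrix_trace
  have ht_int : Integrable t μ := by
    refine Integrable.mono' (integrable_const ((mt : ℝ) * mr))
      ht_cont.measurable.aestronglyMeasurable (ae_of_all _ fun U => ?_)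
    rw [Real.norm_eq_abs, abs_of_nonneg (ht_nonneg U)]
    exact ht_le U
  -- the mean of t
  set T : ℝ := ∫ U, t U ∂μ with hTdef
  have hT : T = (mt : ℝ) * mr / m := by
    rw [hTdef]
    calc ∫ U, t U ∂μ
        = ∫ U, ∑ j : Fin mt, ∑ i : Fin mr,
            Complex.normSq ((U : Matrix (Fin m) (Fin m) ℂ)
              (Fin.castLE hr i) (Fin.castLE ht j)) ∂μ :=
          integral_congr_ae (ae_of_all _ ht_eq)
      _ = ∑ j : Fin mt, ∑ i : Fin mr, ∫ U,
            Complex.normSq ((U : Matrix (Fin m) (Fin m) ℂ)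
              (Fin.castLE hr i) (Fin.castLE ht j)) ∂μ := by
          rw [integral_finset_sum _ fun j _ =>
            integrable_finset_sum _ fun i _ => integrable_entry μ _ _]
          exact Finset.sum_congr rfl fun j _ =>
            integral_finset_sum _ fun i _ => integrable_entry μ _ _
      _ = ∑ _j : Fin mt, ∑ _i : Fin mr, (1 / m : ℝ) :=
          Finset.sum_congr rfl fun j _ => Finset.sum_congr rfl fun i _ => integral_entry μ _ _
      _ = (mt : ℝ) * mr / m := by
          simp [Finset.sum_const, Finset.card_univ]
          ring
  -- measurability and integrability of the log-det integrand
  have hFmeas : ∀ s : ℝ, AEStronglyMeasurable (F s) μ := by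
    intro s
    apply Measurable.aestronglyMeasurable
    apply Real.measurable_log.comp
    apply Continuous.measurable
    apply Complex.continuous_re.comp
    exact (continuous_const.add (hAcont.const_smul ((s:ℂ)))).matrix_det
  have hFbound : ∀ s : ℝ, 0 < s → ∀ U,
      0 ≤ F s U ∧ s * t U - s ^ 2 * (mt * t U ^ 2) ≤ F s U ∧ F s U ≤ s * t U :=
    fun s hs U => log_det_bounds (hpsd U) hs
  have hFint : ∀ s : ℝ, 0 < s → Integrable (F s) μ := by
    intro s hs
    refine Integrable.mono' ((ht_int.const_mul s).norm) (hFmeas s) (ae_of_all _ fun U => ?_)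
    rw [Real.norm_eq_abs, abs_of_nonneg (hFbound s hs U).1]
    exact le_trans (hFbound s hs U).2.2 (le_abs_self _)
  -- the constant K
  set K : ℝ := (mt : ℝ) * ((mt : ℝ) * mr) ^ 2 with hKdef
  have hK0 : 0 ≤ K := by positivity
  -- integral bounds
  have hCbound : ∀ s : ℝ, 0 < s →
      s * T - s ^ 2 * K ≤ (∫ U, F s U ∂μ) ∧ (∫ U, F s U ∂μ) ≤ s * T := by
    intro s hs
    constructor
    · have hpt : ∀ U, s * t U - s ^ 2 * K ≤ F s U := by
        intro U
        refine le_trans ?_ (hFbound s hs U).2.1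
        have h1 : (mt : ℝ) * t U ^ 2 ≤ K := by
          rw [hKdef]
          have := pow_le_pow_left₀ (ht_nonneg U) (ht_le U) 2
          nlinarith [Nat.cast_nonneg (α := ℝ) mt]
        nlinarith [sq_nonneg s]
      calc s * T - s ^ 2 * K
          = ∫ U, (s * t U - s ^ 2 * K) ∂μ := by
            rw [integral_sub (ht_int.const_mul s) (integrable_const _), integral_const,
              integral_const_mul, probReal_univ]
            simp [hTdef]
        _ ≤ ∫ U, F s U ∂μ :=
            integral_mono ((ht_int.const_mul s).sub (integrable_const _)) (hFint s hs)
              fun U => hpt U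
    · calc ∫ U, F s U ∂μ ≤ ∫ U, s * t U ∂μ :=
          integral_mono (hFint s hs) (ht_int.const_mul s) fun U => (hFbound s hs U).2.2
        _ = s * T := by rw [integral_const_mul]
  have key : Filter.Tendsto (fun s : ℝ => (∫ U, F s U ∂μ) / s)
      (nhdsWithin 0 (Set.Ioi 0)) (nhds ((mt : ℝ) * mr / m)) := by
    refine tendsto_of_tendsto_of_tendsto_of_le_of_le'
      (g := fun s : ℝ => T - s * K) (h := fun _ : ℝ => T) ?_ ?_ ?_ ?_
    · have hcont : Filter.Tendsto (fun s : ℝ => T - s * K) (nhds 0) (nhds (T - 0 * K)) :=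
        (continuous_const.sub (continuous_id.mul continuous_const)).tendsto 0
      simpa [hT] using hcont.mono_left nhdsWithin_le_nhds
    · rw [← hT]
      exact tendsto_const_nhds
    · filter_upwards [self_mem_nhdsWithin] with s hs
      have hs' : (0:ℝ) < s := hs
      rw [le_div_iff₀ hs']
      calc (T - s * K) * s = s * T - s ^ 2 * K := by ring
        _ ≤ ∫ U, F s U ∂μ := (hCbound s hs').1
    · filter_upwards [self_mem_nhdsWithin] with s hs
      have hs' : (0:ℝ) < s := hs
      rw [div_le_iff₀ hs']
      calc ∫ U, F s U ∂μ ≤ s * T := (hCbound s hs').2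
        _ = T * s := by ring
  exact key
end

section
/- Let n be a positive integer, let (Ω, μ) be a probability space, and let A : Ω → (n×n complex matrices) be a random matrix such that A(ω) is Hermitian positive semidefinite for all ω, ω ↦ trace(A(ω)) is integrable, and ω ↦ ln det(I_n + s·A(ω)) is integrable. Then for every s ≥ 0, E[ln det(I_n + s·A)] ≤ n · ln(1 + s·E[trace A]/n). -/
open MeasureTheory Matrix
open scoped ComplexOrder

lemma pointwise_log_det_le_aux (n : ℕ) (hn : 0 < n) (B : Matrix (Fin n) (Fin n) ℂ)
    (hB : B.PosSemidef) (s : ℝ) (hs : 0 ≤ s) :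
    Real.log ((Matrix.det ((1 : Matrix (Fin n) (Fin n) ℂ) + (s : ℂ) • B)).re)
      ≤ n * Real.log (1 + s * (Matrix.trace B).re / n) := by
  have hH := hB.1
  set U : Matrix (Fin n) (Fin n) ℂ := (hH.eigenvectorUnitary : Matrix (Fin n) (Fin n) ℂ) with hU
  have hspec := hH.spectral_theorem
  rw [Unitary.conjStarAlgAut_apply, ← hU] at hspec
  have hUU : U * star U = 1 := (Matrix.mem_unitaryGroup_iff).mp hH.eigenvectorUnitary.2
  have hUU' : star U * U = 1 := (Matrix.mem_unitaryGroup_iff').mp hH.eigenvectorUnitary.2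
  set z : Fin n → ℝ := fun i => 1 + s * hH.eigenvalues i with hz
  have hzpos : ∀ i, 0 < z i := fun i => by
    have := hB.eigenvalues_nonneg i
    have : 0 ≤ s * hH.eigenvalues i := mul_nonneg hs this
    simp only [hz]; linarith
  have hdet : det ((1 : Matrix (Fin n) (Fin n) ℂ) + (s:ℂ) • B) = ((∏ i, z i : ℝ) : ℂ) := by
    calc det ((1 : Matrix (Fin n) (Fin n) ℂ) + (s:ℂ) • B)
        = det (U * (1 + (s:ℂ) • diagonal (RCLike.ofReal ∘ hH.eigenvalues)) * star U) := by
          rw [Matrix.mul_add, Matrix.add_mul, Matrix.mul_one, hUU, mul_smul_comm, smul_mul_assoc,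
            ← hspec]
      _ = ((∏ i, z i : ℝ) : ℂ) := by
          rw [det_mul, det_mul, mul_comm, ← mul_assoc, ← det_mul, hUU', det_one, one_mul,
            ← diagonal_one, ← diagonal_smul]
          rw [show (diagonal fun _ : Fin n => (1:ℂ)) + diagonal ((s:ℂ) • RCLike.ofReal ∘ hH.eigenvalues)
            = diagonal (fun i => ((z i : ℝ) : ℂ)) by
              rw [diagonal_add]; congr 1; funext i; simp only [Pi.add_apply, Pi.smul_apply,
                Function.comp_apply, smul_eq_mul, hz]; push_cast; rfl, det_diagonal]
          push_cast
          rfl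
  have htr : (Matrix.trace B).re = ∑ i, hH.eigenvalues i := by
    have : Matrix.trace B = ((∑ i, hH.eigenvalues i : ℝ) : ℂ) := by
      calc Matrix.trace B
          = Matrix.trace (U * diagonal (RCLike.ofReal ∘ hH.eigenvalues) * star U) := by
            rw [← hspec]
        _ = ((∑ i, hH.eigenvalues i : ℝ) : ℂ) := by
            rw [Matrix.trace_mul_cycle, hUU', Matrix.one_mul, trace_diagonal]
            push_cast; rfl
    rw [this, Complex.ofReal_re]
  rw [hdet, Complex.ofReal_re, htr]
  have hnR : (0:ℝ) < n := Nat.cast_pos.mpr hn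
  have hsum : ∑ i : Fin n, (n:ℝ)⁻¹ * z i = 1 + s * (∑ i, hH.eigenvalues i) / n := by
    rw [← Finset.mul_sum]
    simp only [hz, Finset.sum_add_distrib, Finset.sum_const, Finset.card_univ, Fintype.card_fin,
      nsmul_eq_mul, ← Finset.mul_sum]
    field_simp
  have amgm := Real.geom_mean_le_arith_mean_weighted Finset.univ (fun _ => (n:ℝ)⁻¹) z
    (fun i _ => by positivity)
    (by simp [Finset.sum_const, Finset.card_univ]; exact mul_inv_cancel₀ hnR.ne')
    (fun i _ => (hzpos i).le)
  have amgm' : ∏ i : Fin n, z i ^ ((n:ℝ)⁻¹) ≤ 1 + s * (∑ i, hH.eigenvalues i) / n := by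
    rw [← hsum]; exact amgm
  have hprodpos : 0 < ∏ i : Fin n, z i ^ ((n:ℝ)⁻¹) :=
    Finset.prod_pos (fun i _ => Real.rpow_pos_of_pos (hzpos i) _)
  have hlog1 := Real.log_le_log hprodpos amgm'
  rw [Real.log_prod (fun i _ => (Real.rpow_pos_of_pos (hzpos i) _).ne')] at hlog1
  simp only [Real.log_rpow (hzpos _)] at hlog1
  have : Real.log (∏ i, z i) = ∑ i, Real.log (z i) :=
    Real.log_prod (fun i _ => (hzpos i).ne')
  rw [this]
  calc ∑ i, Real.log (z i) = n * ∑ i : Fin n, (n:ℝ)⁻¹ * Real.log (z i) := by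
        rw [← Finset.mul_sum]; field_simp
    _ ≤ n * Real.log (1 + s * (∑ i, hH.eigenvalues i) / n) := by
        apply mul_le_mul_of_nonneg_left _ hnR.le
        exact hlog1

lemma trace_re_nonneg_aux (n : ℕ) (B : Matrix (Fin n) (Fin n) ℂ) (hB : B.PosSemidef) :
    0 ≤ (Matrix.trace B).re := by
  have hdiag : ∀ i, 0 ≤ (B i i).re := by
    intro i
    have h := hB.re_dotProduct_nonneg (Pi.single i 1)
    simpa [dotProduct, mulVec, Pi.single_apply, Finset.sum_ite_eq, Finset.mul_sum] using h
  rw [Matrix.trace, Complex.re_sum]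
  exact Finset.sum_nonneg fun i _ => hdiag i

/-- **Jensen's-inequality upper bound for the expected log-determinant.**
Let `(Ω, μ)` be a probability space and `A : Ω → ℂ^{n×n}` a random Hermitian positive
semidefinite matrix with integrable trace and integrable `ln det (I + s·A)`. Then for
every `s ≥ 0`, `E[ln det (I + s·A)] ≤ n · ln (1 + s · E[trace A] / n)`. -/
theorem expected_log_det_le_of_posSemidef
    (n : ℕ) (hn : 0 < n)
    {Ω : Type*} [MeasurableSpace Ω] (μ : Measure Ω) [IsProbabilityMeasure μ]
    (A : Ω → Matrix (Fin n) (Fin n) ℂ)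
    (hA : ∀ ω, (A ω).PosSemidef)
    (s : ℝ) (hs : 0 ≤ s)
    (htr : Integrable (fun ω => (Matrix.trace (A ω)).re) μ)
    (hlog : Integrable (fun ω =>
      Real.log ((Matrix.det ((1 : Matrix (Fin n) (Fin n) ℂ) + (s : ℂ) • A ω)).re)) μ) :
    ∫ ω, Real.log ((Matrix.det ((1 : Matrix (Fin n) (Fin n) ℂ) + (s : ℂ) • A ω)).re) ∂μ
      ≤ n * Real.log (1 + s * (∫ ω, (Matrix.trace (A ω)).re ∂μ) / n) := by
  have hnR : (0:ℝ) < n := Nat.cast_pos.mpr hn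
  set f : Ω → ℝ := fun ω => (Matrix.trace (A ω)).re with hf
  set f' : Ω → ℝ := fun ω => 1 + s * f ω / n with hf'
  have hf0 : ∀ ω, 0 ≤ f ω := fun ω => trace_re_nonneg_aux n (A ω) (hA ω)
  have hf'1 : ∀ ω, 1 ≤ f' ω := by
    intro ω
    have : 0 ≤ s * f ω / n := div_nonneg (mul_nonneg hs (hf0 ω)) hnR.le
    simp only [hf']; linarith
  have hfi2 : Integrable (fun ω => s * f ω / n) μ := (htr.const_mul s).div_const n
  have hfi' : Integrable f' μ := by
    simpa [hf'] using (integrable_const (1:ℝ)).add hfi2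
  have hmeas : AEStronglyMeasurable (fun ω => Real.log (f' ω)) μ := by
    apply (Real.measurable_log.comp_aemeasurable _).aestronglyMeasurable
    exact ((htr.aemeasurable.const_mul s).div_const n).const_add 1
  have hgi : Integrable (fun ω => Real.log (f' ω)) μ := by
    refine Integrable.mono' hfi2 hmeas (Filter.Eventually.of_forall fun ω => ?_)
    rw [Real.norm_eq_abs, abs_of_nonneg (Real.log_nonneg (hf'1 ω))]
    have h := Real.log_le_sub_one_of_pos (lt_of_lt_of_le one_pos (hf'1 ω))
    simp only [hf'] at h ⊢
    linarith
  have hg : ConcaveOn ℝ (Set.Ici (1:ℝ)) Real.log :=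
    strictConcaveOn_log_Ioi.concaveOn.subset
      (fun x hx => Set.mem_Ioi.mpr (lt_of_lt_of_le one_pos hx)) (convex_Ici 1)
  have hgc : ContinuousOn Real.log (Set.Ici (1:ℝ)) :=
    Real.continuousOn_log.mono (fun x hx => by
      simp only [Set.mem_compl_iff, Set.mem_singleton_iff]
      have : (1:ℝ) ≤ x := hx
      intro h; rw [h] at this; linarith)
  have jensen := hg.le_map_integral hgc isClosed_Ici
    (Filter.Eventually.of_forall fun ω => hf'1 ω) hfi' (by exact hgi)
  have hintf' : ∫ ω, f' ω ∂μ = 1 + s * (∫ ω, f ω ∂μ) / n := by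
    rw [hf']
    rw [integral_add (integrable_const 1) hfi2]
    simp only [integral_const, measure_univ, ENNReal.toReal_one, probReal_univ, smul_eq_mul, mul_one, one_smul]
    rw [integral_div, integral_const_mul]
  calc ∫ ω, Real.log ((Matrix.det ((1 : Matrix (Fin n) (Fin n) ℂ) + (s : ℂ) • A ω)).re) ∂μ
      ≤ ∫ ω, (n : ℝ) * Real.log (f' ω) ∂μ := by
        refine integral_mono hlog (hgi.const_mul _) fun ω => ?_
        exact pointwise_log_det_le_aux n hn (A ω) (hA ω) s hs
    _ = n * ∫ ω, Real.log (f' ω) ∂μ := integral_const_mul _ _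
    _ ≤ n * Real.log (∫ ω, f' ω ∂μ) := mul_le_mul_of_nonneg_left jensen hnR.le
    _ = n * Real.log (1 + s * (∫ ω, f ω ∂μ) / n) := by rw [hintf']
end

section
/- Let n be a positive integer, let A be an n×n Hermitian positive semidefinite complex matrix, and let s ≥ 0. Then ln det(I_n + s·A) ≥ n · ln(1 + s·(det A)^{1/n}). -/
open Matrix Finset
open scoped ComplexOrder

/-- Scalar Minkowski-type inequality. -/
lemma key_ineq (n : ℕ) (hn : 0 < n) (μ : Fin n → ℝ) (hμ : ∀ i, 0 ≤ μ i)
    (s : ℝ) (hs : 0 ≤ s) :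
    (n : ℝ) * Real.log (1 + s * (∏ i, μ i) ^ ((1 : ℝ) / n))
      ≤ Real.log (∏ i, (1 + s * μ i)) := by
  have h1 : ∀ i : Fin n, 0 < 1 + s * μ i := fun i => by
    have := mul_nonneg hs (hμ i); linarith
  have hP : 0 < ∏ i, (1 + s * μ i) := Finset.prod_pos fun i _ => h1 i
  have hP1 : (1:ℝ) ≤ ∏ i, (1 + s * μ i) := by
    calc (1:ℝ) = ∏ _i : Fin n, (1:ℝ) := by simp
    _ ≤ ∏ i, (1 + s * μ i) := Finset.prod_le_prod (by simp)
        (fun i _ => by nlinarith [mul_nonneg hs (hμ i)])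
  by_cases hz : ∃ j, μ j = 0
  · obtain ⟨j, hj⟩ := hz
    have : (∏ i, μ i) = 0 := Finset.prod_eq_zero (Finset.mem_univ j) hj
    rw [this, Real.zero_rpow (by positivity), mul_zero, add_zero, Real.log_one, mul_zero]
    exact Real.log_nonneg hP1
  · push_neg at hz
    have hμpos : ∀ i, 0 < μ i := fun i => (hμ i).lt_of_ne' (hz i)
    set w : Fin n → ℝ := fun _ => (1 : ℝ) / n with hw
    have hwsum : ∑ _i : Fin n, (1 : ℝ) / n = 1 := by
      rw [Finset.sum_const, Finset.card_univ, Fintype.card_fin, nsmul_eq_mul]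
      field_simp
    have hAG1 := Real.geom_mean_le_arith_mean_weighted Finset.univ w
      (fun i => 1 / (1 + s * μ i)) (fun i _ => by positivity) hwsum
      (fun i _ => div_nonneg one_pos.le (h1 i).le)
    have hAG2 := Real.geom_mean_le_arith_mean_weighted Finset.univ w
      (fun i => s * μ i / (1 + s * μ i)) (fun i _ => by positivity) hwsum
      (fun i _ => div_nonneg (mul_nonneg hs (hμ i)) (h1 i).le)
    have hsum : (∏ i, (1 / (1 + s * μ i)) ^ ((1:ℝ)/n))
        + (∏ i, (s * μ i / (1 + s * μ i)) ^ ((1:ℝ)/n)) ≤ 1 := by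
      have := add_le_add hAG1 hAG2
      rw [← Finset.sum_add_distrib] at this
      refine this.trans_eq ?_
      rw [← hwsum]
      refine Finset.sum_congr rfl fun i _ => ?_
      have := (h1 i).ne'
      field_simp [hw]
      have hn' : (n:ℝ) ≠ 0 := by positivity
      rw [hwsum, mul_div_assoc, div_self this, mul_one, hw]
      dsimp only
      rw [one_div, inv_mul_cancel₀ hn']
    -- collect the products
    have e1 : (∏ i, (1 / (1 + s * μ i)) ^ ((1:ℝ)/n))
        = (∏ i, (1 + s * μ i))⁻¹ ^ ((1:ℝ)/n) := by
      rw [Real.finset_prod_rpow _ _ (fun i _ => div_nonneg one_pos.le (h1 i).le)]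
      congr 1
      rw [← Finset.prod_inv_distrib]
      exact Finset.prod_congr rfl fun i _ => one_div _
    have e2 : (∏ i, (s * μ i / (1 + s * μ i)) ^ ((1:ℝ)/n))
        = (s ^ n * (∏ i, μ i) / ∏ i, (1 + s * μ i)) ^ ((1:ℝ)/n) := by
      rw [Real.finset_prod_rpow _ _
        (fun i _ => div_nonneg (mul_nonneg hs (hμ i)) (h1 i).le)]
      congr 1
      rw [Finset.prod_div_distrib, Finset.prod_mul_distrib, Finset.prod_const,
        Finset.card_univ, Fintype.card_fin]
    rw [e1, e2] at hsum
    -- multiply by P^{1/n}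
    set P := ∏ i, (1 + s * μ i)
    have hPrpos : (0:ℝ) < P ^ ((1:ℝ)/n) := Real.rpow_pos_of_pos hP _
    have hmul : 1 + s * (∏ i, μ i) ^ ((1:ℝ)/n) ≤ P ^ ((1:ℝ)/n) := by
      have h := mul_le_mul_of_nonneg_right hsum hPrpos.le
      rw [add_mul, one_mul] at h
      have t1 : P⁻¹ ^ ((1:ℝ)/n) * P ^ ((1:ℝ)/n) = 1 := by
        rw [← Real.mul_rpow (inv_nonneg.mpr hP.le) hP.le, inv_mul_cancel₀ hP.ne',
          Real.one_rpow]
      have t2 : (s ^ n * (∏ i, μ i) / P) ^ ((1:ℝ)/n) * P ^ ((1:ℝ)/n)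
          = s * (∏ i, μ i) ^ ((1:ℝ)/n) := by
        rw [← Real.mul_rpow (div_nonneg (mul_nonneg (pow_nonneg hs n)
            (Finset.prod_nonneg fun i _ => hμ i)) hP.le) hP.le,
          div_mul_cancel₀ _ hP.ne',
          Real.mul_rpow (pow_nonneg hs n) (Finset.prod_nonneg fun i _ => hμ i)]
        congr 1
        rw [← Real.rpow_natCast s n, ← Real.rpow_mul hs]
        rw [mul_one_div, div_self (Nat.cast_ne_zero.mpr hn.ne'), Real.rpow_one]
      rw [t1, t2] at h
      linarith
    have hG : (0:ℝ) ≤ ∏ i, μ i := Finset.prod_nonneg fun i _ => hμ i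
    have hL : 0 < 1 + s * (∏ i, μ i) ^ ((1:ℝ)/n) := by
      have := mul_nonneg hs (Real.rpow_nonneg hG ((1:ℝ)/n))
      linarith
    calc (n : ℝ) * Real.log (1 + s * (∏ i, μ i) ^ ((1:ℝ)/n))
        ≤ (n : ℝ) * Real.log (P ^ ((1:ℝ)/n)) := by
          exact mul_le_mul_of_nonneg_left (Real.log_le_log hL hmul) (by positivity)
      _ = Real.log P := by
          rw [Real.log_rpow hP]
          field_simp

/-- **Pointwise lower bound for the log-determinant.** For an `n × n` Hermitian positive
semidefinite complex matrix `A` and `s ≥ 0`,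
`ln det (I + s·A) ≥ n · ln (1 + s · (det A) ^ (1/n))`. -/
theorem log_det_one_add_smul_ge
    (n : ℕ) (hn : 0 < n)
    (A : Matrix (Fin n) (Fin n) ℂ) (hA : A.PosSemidef)
    (s : ℝ) (hs : 0 ≤ s) :
    (n : ℝ) * Real.log (1 + s * A.det.re ^ ((1 : ℝ) / n))
      ≤ Real.log ((Matrix.det ((1 : Matrix (Fin n) (Fin n) ℂ) + (s : ℂ) • A)).re) := by
  set μ := hA.1.eigenvalues
  have hμ : ∀ i, 0 ≤ μ i := hA.eigenvalues_nonneg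
  have hdetA : A.det.re = ∏ i, μ i := by
    rw [hA.1.det_eq_prod_eigenvalues]
    norm_cast
  have hdet2 : ((1 : Matrix (Fin n) (Fin n) ℂ) + (s : ℂ) • A).det.re
      = ∏ i, (1 + s * μ i) := by
    set U := (hA.1.eigenvectorUnitary : Matrix (Fin n) (Fin n) ℂ)
    have hUU : U * star U = 1 := (Matrix.mem_unitaryGroup_iff).mp hA.1.eigenvectorUnitary.2
    have hspec : A = U * diagonal (RCLike.ofReal ∘ μ) * star U := hA.1.spectral_theorem
    have hrw : (1 : Matrix (Fin n) (Fin n) ℂ) + (s : ℂ) • A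
        = U * (1 + (s : ℂ) • diagonal (RCLike.ofReal ∘ μ)) * star U := by
      rw [mul_add, add_mul, mul_one, hUU, Matrix.mul_smul, Matrix.smul_mul, ← hspec]
    rw [hrw, det_mul_right_comm, hUU, one_mul]
    have : (1 : Matrix (Fin n) (Fin n) ℂ) + (s:ℂ) • diagonal (RCLike.ofReal ∘ μ)
        = diagonal (fun i => (1 : ℂ) + s * μ i) := by
      rw [← diagonal_one, ← diagonal_smul, ← diagonal_add]
      congr 1
    rw [this, det_diagonal]
    have : (∏ i, ((1 : ℂ) + s * μ i)) = ((∏ i, (1 + s * μ i) : ℝ) : ℂ) := by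
      norm_cast
    rw [this, Complex.ofReal_re]
  rw [hdetA, hdet2]
  exact key_ineq n hn μ hμ s hs
end
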